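/- Through each point of the boundary sphere passes exactly one projective line tangent to the sphere, meeting the closed ball only at that point. Concretely: let v : Fin 3 → ℂ be nonzero with B(v,v) = 0. Then the subspace v^⊥ := {w : Fin 3 → ℂ | B(v,w) = 0} has complex dimension 2, contains v, and for every w ∈ v^⊥ one has Re(B(w,w)) ≥ 0, with B(w,w) = 0 if and only if w is a complex scalar multiple of v. -/

import Mathlib

open Matrix

/-- The linear functional `w ↦ B(v, w)` for the Hermitian form `B` of signature
(1,2), where `B(v,w) = star v ⬝ᵥ (diagonal ![-1,1,1]).mulVec w`. -/
noncomputable def hermitianForm (v : Fin 3 → ℂ) : (Fin 3 → ℂ) →ₗ[ℂ] ℂ where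
  toFun w := star v ⬝ᵥ (Matrix.diagonal ![-1, 1, 1] : Matrix (Fin 3) (Fin 3) ℂ).mulVec w
  map_add' x y := by simp [Matrix.mulVec_add, dotProduct_add]
  map_smul' c x := by simp [Matrix.mulVec_smul, dotProduct_smul]

lemma form_eq (v w : Fin 3 → ℂ) :
    star v ⬝ᵥ (Matrix.diagonal ![-1, 1, 1] : Matrix (Fin 3) (Fin 3) ℂ).mulVec w =
    -(starRingEnd ℂ (v 0) * w 0) + starRingEnd ℂ (v 1) * w 1 + starRingEnd ℂ (v 2) * w 2 := by
  simp [dotProduct, mulVec, Matrix.diagonal, Fin.sum_univ_three]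

lemma herm_apply (v w : Fin 3 → ℂ) :
    hermitianForm v w =
    -(starRingEnd ℂ (v 0) * w 0) + starRingEnd ℂ (v 1) * w 1 + starRingEnd ℂ (v 2) * w 2 :=
  form_eq v w

theorem tangent_line_at_boundary_point (v : Fin 3 → ℂ) (hv : v ≠ 0)
    (hiso : star v ⬝ᵥ (Matrix.diagonal ![-1, 1, 1] : Matrix (Fin 3) (Fin 3) ℂ).mulVec v = 0) :
    Module.finrank ℂ (LinearMap.ker (hermitianForm v)) = 2 ∧
    v ∈ LinearMap.ker (hermitianForm v) ∧
    ∀ w ∈ LinearMap.ker (hermitianForm v),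
      0 ≤ (star w ⬝ᵥ (Matrix.diagonal ![-1, 1, 1] : Matrix (Fin 3) (Fin 3) ℂ).mulVec w).re ∧
      (star w ⬝ᵥ (Matrix.diagonal ![-1, 1, 1] : Matrix (Fin 3) (Fin 3) ℂ).mulVec w = 0 ↔
        ∃ c : ℂ, w = c • v) := by
  have hiso' : -(starRingEnd ℂ (v 0) * v 0) + starRingEnd ℂ (v 1) * v 1
      + starRingEnd ℂ (v 2) * v 2 = 0 := by rw [← form_eq]; exact hiso
  have hv0 : v 0 ≠ 0 := by
    intro h0
    apply hv
    have h1 : (Complex.normSq (v 1) : ℂ) + Complex.normSq (v 2) = 0 := by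
      rw [Complex.normSq_eq_conj_mul_self, Complex.normSq_eq_conj_mul_self]
      linear_combination hiso' + (starRingEnd ℂ (v 0)) * h0
    have h2 : Complex.normSq (v 1) + Complex.normSq (v 2) = 0 := by exact_mod_cast h1
    have e1 : v 1 = 0 := by
      have a := Complex.normSq_nonneg (v 1); have b := Complex.normSq_nonneg (v 2)
      exact Complex.normSq_eq_zero.mp (by linarith)
    have e2 : v 2 = 0 := by
      have a := Complex.normSq_nonneg (v 1); have b := Complex.normSq_nonneg (v 2)
      exact Complex.normSq_eq_zero.mp (by linarith)
    funext i; fin_cases i <;> simp [h0, e1, e2]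
  have hvmem : v ∈ LinearMap.ker (hermitianForm v) := by
    rw [LinearMap.mem_ker, herm_apply]; exact hiso'
  refine ⟨?_, hvmem, ?_⟩
  · -- finrank of kernel
    have he : hermitianForm v (Pi.single 0 1) = -(starRingEnd ℂ (v 0)) := by
      simp [herm_apply, Pi.single_apply]
    have hne : -(starRingEnd ℂ (v 0)) ≠ 0 := by simpa using hv0
    have hsurj : LinearMap.range (hermitianForm v) = ⊤ := by
      rw [LinearMap.range_eq_top]
      intro c
      refine ⟨(c / (-(starRingEnd ℂ (v 0)))) • (Pi.single 0 1 : Fin 3 → ℂ), ?_⟩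
      rw [LinearMap.map_smul, he, smul_eq_mul, div_mul_cancel₀ _ hne]
    have h3 := LinearMap.finrank_range_add_finrank_ker (hermitianForm v)
    rw [hsurj] at h3
    simp [Module.finrank_fin_fun] at h3
    omega
  · intro w hw
    rw [LinearMap.mem_ker, herm_apply] at hw
    rw [form_eq]
    set c0 := starRingEnd ℂ with hc0
    have hwconj : -(v 0 * c0 (w 0)) + v 1 * c0 (w 1) + v 2 * c0 (w 2) = 0 := by
      have h := congrArg c0 hw
      simp only [map_add, map_neg, map_zero, _root_.map_mul, hc0, Complex.conj_conj] at h
      linear_combination h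
    set t : ℂ := v 1 * w 2 - v 2 * w 1 with ht
    have key : (Complex.normSq (v 0) : ℂ) *
        (-(c0 (w 0) * w 0) + c0 (w 1) * w 1 + c0 (w 2) * w 2) = Complex.normSq t := by
      rw [Complex.normSq_eq_conj_mul_self, Complex.normSq_eq_conj_mul_self, ht]
      simp only [map_sub, _root_.map_mul, hc0]
      have hwQ : c0 (v 0) * w 0 = c0 (v 1) * w 1 + c0 (v 2) * w 2 := by linear_combination -hw
      have hwR : v 0 * c0 (w 0) = v 1 * c0 (w 1) + v 2 * c0 (w 2) := by linear_combination -hwconj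
      have hprod : (c0 (v 0) * w 0) * (v 0 * c0 (w 0)) =
          (c0 (v 1) * w 1 + c0 (v 2) * w 2) * (v 1 * c0 (w 1) + v 2 * c0 (w 2)) := by
        rw [hwQ, hwR]
      linear_combination (-(c0 (w 1) * w 1 + c0 (w 2) * w 2)) * hiso' - hprod
    have hns : Complex.normSq (v 0) ≠ 0 := fun h => hv0 (Complex.normSq_eq_zero.mp h)
    have hBval : (-(c0 (w 0) * w 0) + c0 (w 1) * w 1 + c0 (w 2) * w 2)
        = ((Complex.normSq t / Complex.normSq (v 0) : ℝ) : ℂ) := by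
      push_cast
      rw [eq_div_iff (by exact_mod_cast hns)]
      linear_combination key
    constructor
    · rw [hBval, Complex.ofReal_re]
      exact div_nonneg (Complex.normSq_nonneg t) (Complex.normSq_nonneg (v 0))
    · rw [hBval]
      constructor
      · intro h
        have hr : Complex.normSq t / Complex.normSq (v 0) = 0 := by exact_mod_cast h
        have ht0 : t = 0 := by
          rcases div_eq_zero_iff.mp hr with h' | h'
          · exact Complex.normSq_eq_zero.mp h'
          · exact absurd h' hns
        refine ⟨w 0 / v 0, ?_⟩
        have hc1 : v 0 * w 1 = v 1 * w 0 := by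
          have hh : c0 (v 0) * (v 0 * w 1 - v 1 * w 0) = -(c0 (v 2)) * t := by
            rw [ht]; linear_combination (-(w 1)) * hiso' + v 1 * hw
          rw [ht0, mul_zero] at hh
          rcases mul_eq_zero.mp hh with h' | h'
          · exact absurd h' (by simpa [hc0] using hv0)
          · linear_combination h'
        have hc2 : v 0 * w 2 = v 2 * w 0 := by
          have hh : c0 (v 0) * (v 0 * w 2 - v 2 * w 0) = c0 (v 1) * t := by
            rw [ht]; linear_combination (-(w 2)) * hiso' + v 2 * hw
          rw [ht0, mul_zero] at hh
          rcases mul_eq_zero.mp hh with h' | h'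
          · exact absurd h' (by simpa [hc0] using hv0)
          · linear_combination h'
        funext i
        fin_cases i
        · show w 0 = w 0 / v 0 * v 0
          field_simp
        · show w 1 = w 0 / v 0 * v 1
          field_simp
          linear_combination hc1
        · show w 2 = w 0 / v 0 * v 2
          field_simp
          linear_combination hc2
      · rintro ⟨c, rfl⟩
        have ht0 : t = 0 := by
          rw [ht]; simp only [Pi.smul_apply, smul_eq_mul]; ring
        simp [ht0]
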